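/- Spanners preserve the primal transshipment optimum up to factor α: let G' = (V, E') with E' ⊆ E be a subgraph of G that α-approximates G for some α ≥ 1, with incidence matrix A' and weight matrix W' (the restrictions of A and W to the columns/indices in E'). Then for every b ∈ ℝ^V and every x ∈ ℝ^E with Ax = b, there exists x' ∈ ℝ^{E'} with A'x' = b and ‖W'x'‖₁ ≤ α·‖Wx‖₁; consequently, an optimal solution of the shortest transshipment problem on G' is an α-approximate solution of the shortest transshipment problem on G. -/

import Mathlib

open Matrix BigOperators

/-- ∞-norm `‖v‖_∞ = maxᵢ |vᵢ|` (as `max(0, maxᵢ |vᵢ|)`, which agrees with it). -/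
noncomputable def infnorm {d : Type*} [Fintype d] (v : d → ℝ) : ℝ :=
  Finset.univ.fold max 0 (fun i => |v i|)

/-- 1-norm `‖v‖₁ = Σᵢ |vᵢ|`. -/
noncomputable def onenorm {d : Type*} [Fintype d] (v : d → ℝ) : ℝ := ∑ i, |v i|

/-- Node-arc incidence matrix of the graph with oriented edge set `E`:
entry `1` at the head of an edge, `-1` at its tail, `0` elsewhere. -/
noncomputable def incMat {V : Type*} [Fintype V] [DecidableEq V] (E : Finset (V × V)) :
    Matrix V ↥E ℝ :=
  fun v e => (if v = (e : V × V).2 then 1 else 0) - (if v = (e : V × V).1 then 1 else 0)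

/-- A step from `a` to `b` traverses an edge of `E'` in either direction. -/
def stepOK {V : Type*} (E' : Finset (V × V)) (a b : V) : Prop :=
  (a, b) ∈ E' ∨ (b, a) ∈ E'

/-- Cost of traversing, from `a` to `b`, an edge of `E'` (in either direction). -/
noncomputable def stepCost {V : Type*} [DecidableEq V] (E' : Finset (V × V)) (w : V × V → ℝ)
    (a b : V) : ℝ :=
  if (a, b) ∈ E' then w (a, b) else w (b, a)

/-- `E'` α-approximates `E`: for every edge `e = (u,v) ∈ E` there is a walk from `u` to `v`
using edges of `E'` (traversed in either direction) of total weight at most `α·w(e)`. -/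
def ApproximatesBy {V : Type*} [DecidableEq V] (E E' : Finset (V × V)) (w : V × V → ℝ)
    (α : ℝ) : Prop :=
  ∀ e ∈ E, ∃ l : List V,
    List.Chain (stepOK E') e.1 l ∧
    (e.1 :: l).getLast (List.cons_ne_nil _ _) = e.2 ∧
    (((e.1 :: l).zip l).map fun p => stepCost E' w p.1 p.2).sum ≤ α * w e

section Aux

variable {V : Type*} [Fintype V] [DecidableEq V]

noncomputable def stepFlow (E' : Finset (V × V)) (a b : V) : ↥E' → ℝ :=
  fun f => if (a, b) ∈ E' then (if (f : V × V) = (a, b) then 1 else 0)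
           else (if (f : V × V) = (b, a) then -1 else 0)

noncomputable def walkFlow (E' : Finset (V × V)) : V → List V → (↥E' → ℝ)
  | _, [] => 0
  | a, b :: l => stepFlow E' a b + walkFlow E' b l

lemma incMat_mulVec_single (E : Finset (V × V)) (c : ℝ) (p : V × V) (hp : p ∈ E) (v : V) :
    (incMat E *ᵥ fun f : ↥E => if (f : V × V) = p then c else 0) v
      = incMat E v ⟨p, hp⟩ * c := by
  simp only [mulVec, dotProduct]
  rw [Finset.sum_eq_single (⟨p, hp⟩ : ↥E)]
  · simp
  · intro f _ hf
    rw [if_neg (fun h => hf (Subtype.ext h)), mul_zero]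
  · simp

lemma mulVec_stepFlow (E' : Finset (V × V)) {a b : V} (h : stepOK E' a b) :
    incMat E' *ᵥ stepFlow E' a b =
      fun v => (if v = b then 1 else 0) - (if v = a then 1 else 0) := by
  funext v
  unfold stepFlow
  by_cases hab : (a, b) ∈ E'
  · simp only [hab, if_true]
    rw [incMat_mulVec_single E' 1 (a, b) hab v]
    simp [incMat]
  · simp only [hab, if_false]
    have hba : (b, a) ∈ E' := h.resolve_left hab
    rw [incMat_mulVec_single E' (-1) (b, a) hba v]
    simp only [incMat]
    ring

lemma onenorm_w_stepFlow (E E' : Finset (V × V)) (hE' : E' ⊆ E) (w : V × V → ℝ)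
    (hw : ∀ e ∈ E, 0 < w e) {a b : V} (h : stepOK E' a b) :
    onenorm (fun f : ↥E' => w ↑f * stepFlow E' a b f) ≤ stepCost E' w a b := by
  unfold onenorm stepFlow stepCost
  by_cases hab : (a, b) ∈ E'
  · simp only [hab, if_true]
    rw [Finset.sum_eq_single (⟨(a, b), hab⟩ : ↥E')]
    · simp [abs_of_pos (hw _ (hE' hab))]
    · intro f _ hf
      rw [if_neg (fun h => hf (Subtype.ext h))]
      simp
    · simp
  · simp only [hab, if_false]
    have hba : (b, a) ∈ E' := h.resolve_left hab
    rw [Finset.sum_eq_single (⟨(b, a), hba⟩ : ↥E')]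
    · simp [abs_of_pos (hw _ (hE' hba))]
    · intro f _ hf
      rw [if_neg (fun h => hf (Subtype.ext h))]
      simp
    · simp

lemma mulVec_walkFlow (E' : Finset (V × V)) :
    ∀ (l : List V) (a : V), List.Chain (stepOK E') a l →
      incMat E' *ᵥ walkFlow E' a l =
        fun v => (if v = (a :: l).getLast (List.cons_ne_nil _ _) then 1 else 0)
               - (if v = a then 1 else 0)
  | [], a, _ => by
      funext v
      simp [walkFlow, Matrix.mulVec_zero, List.getLast]
      exact (sub_self _).symm
  | b :: l, a, hc => by
      obtain ⟨hab, hcl⟩ := List.chain_cons.mp hc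
      have ih := mulVec_walkFlow E' l b hcl
      funext v
      have hlast : (a :: b :: l).getLast (List.cons_ne_nil _ _)
          = (b :: l).getLast (List.cons_ne_nil _ _) := List.getLast_cons _
      show (incMat E' *ᵥ (stepFlow E' a b + walkFlow E' b l)) v = _
      rw [Matrix.mulVec_add, Pi.add_apply, mulVec_stepFlow E' hab, ih, hlast]
      ring

lemma onenorm_w_walkFlow (E E' : Finset (V × V)) (hE' : E' ⊆ E) (w : V × V → ℝ)
    (hw : ∀ e ∈ E, 0 < w e) :
    ∀ (l : List V) (a : V), List.Chain (stepOK E') a l →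
      onenorm (fun f : ↥E' => w ↑f * walkFlow E' a l f)
        ≤ (((a :: l).zip l).map fun p => stepCost E' w p.1 p.2).sum
  | [], a, _ => by simp [walkFlow, onenorm]
  | b :: l, a, hc => by
      obtain ⟨hab, hcl⟩ := List.chain_cons.mp hc
      have h1 := onenorm_w_stepFlow E E' hE' w hw hab
      have h2 := onenorm_w_walkFlow E E' hE' w hw l b hcl
      have hz : ((a :: b :: l).zip (b :: l)) = (a, b) :: ((b :: l).zip l) := rfl
      rw [hz, List.map_cons, List.sum_cons]
      calc onenorm (fun f : ↥E' => w ↑f * walkFlow E' a (b :: l) f)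
          ≤ onenorm (fun f : ↥E' => w ↑f * stepFlow E' a b f)
            + onenorm (fun f : ↥E' => w ↑f * walkFlow E' b l f) := by
            unfold onenorm
            rw [← Finset.sum_add_distrib]
            refine Finset.sum_le_sum fun f _ => ?_
            show |w ↑f * walkFlow E' a (b :: l) f|
              ≤ |w ↑f * stepFlow E' a b f| + |w ↑f * walkFlow E' b l f|
            have : w ↑f * walkFlow E' a (b :: l) f
                = w ↑f * stepFlow E' a b f + w ↑f * walkFlow E' b l f := by
              show w ↑f * (stepFlow E' a b + walkFlow E' b l) f = _
              rw [Pi.add_apply]; ring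
            rw [this]
            exact abs_add_le _ _
        _ ≤ stepCost E' w a b + (((b :: l).zip l).map fun p => stepCost E' w p.1 p.2).sum :=
            add_le_add h1 h2

lemma onenorm_sum_le {d ι : Type*} [Fintype d] (s : Finset ι) (g : ι → d → ℝ) :
    onenorm (fun i => ∑ e ∈ s, g e i) ≤ ∑ e ∈ s, onenorm (g e) := by
  unfold onenorm
  rw [Finset.sum_comm]
  exact Finset.sum_le_sum fun i _ => Finset.abs_sum_le_sum_abs _ _

end Aux

lemma sum_extend {M : Type*} [AddCommMonoid M] (E E' : Finset (V × V)) (hE' : E' ⊆ E)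
    (H : V × V → M) (h0 : ∀ p ∈ E, p ∉ E' → H p = 0) :
    ∑ e : ↥E, H ↑e = ∑ f : ↥E', H ↑f := by
  rw [Finset.sum_coe_sort, Finset.sum_coe_sort]
  exact (Finset.sum_subset hE' h0).symm


/-- Spanners preserve the primal transshipment optimum up to factor `α`:
every flow on `G` can be rerouted on the α-approximating subgraph `G'` at cost at
most `α` times larger; consequently, the zero-extension of an optimal solution on `G'`
is an α-approximate solution on `G`. -/
theorem spanner_primal_lemma {V : Type*} [Fintype V] [DecidableEq V]
    (E E' : Finset (V × V)) (hE' : E' ⊆ E)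
    (w : V × V → ℝ) (hw : ∀ e ∈ E, 0 < w e)
    (α : ℝ) (hα : 1 ≤ α) (happrox : ApproximatesBy E E' w α)
    (b : V → ℝ) (x : ↥E → ℝ) (hx : incMat E *ᵥ x = b) :
    (∃ x' : ↥E' → ℝ, incMat E' *ᵥ x' = b ∧
      onenorm (fun e : ↥E' => w ↑e * x' e) ≤ α * onenorm (fun e : ↥E => w ↑e * x e)) ∧
    ∀ xopt : ↥E' → ℝ, incMat E' *ᵥ xopt = b →
      (∀ x'' : ↥E' → ℝ, incMat E' *ᵥ x'' = b →
        onenorm (fun e : ↥E' => w ↑e * xopt e) ≤ onenorm (fun e : ↥E' => w ↑e * x'' e)) →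
      incMat E *ᵥ (fun e : ↥E => if h : (e : V × V) ∈ E' then xopt ⟨e, h⟩ else 0) = b ∧
      onenorm (fun e : ↥E => w ↑e *
          (if h : (e : V × V) ∈ E' then xopt ⟨e, h⟩ else 0)) ≤
        α * onenorm (fun e : ↥E => w ↑e * x e) := by
  choose l hchain hlast hcost using fun e : ↥E => happrox ↑e e.prop
  set flow : ↥E → ↥E' → ℝ := fun e => walkFlow E' (↑e : V × V).1 (l e) with hflow
  set x' : ↥E' → ℝ := fun f => ∑ e : ↥E, x e * flow e f with hx'
  have hcol : ∀ e : ↥E, incMat E' *ᵥ flow e =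
      fun v => (if v = (↑e : V × V).2 then 1 else 0)
             - (if v = (↑e : V × V).1 then 1 else 0) := by
    intro e
    rw [hflow]
    rw [mulVec_walkFlow E' (l e) (↑e : V × V).1 (hchain e)]
    funext v
    rw [hlast e]
  have key : ∀ v, (incMat E' *ᵥ x') v = ∑ e : ↥E, x e * ((incMat E' *ᵥ flow e) v) := by
    intro v
    show ∑ f : ↥E', incMat E' v f * x' f
        = ∑ e : ↥E, x e * ∑ f : ↥E', incMat E' v f * flow e f
    calc ∑ f : ↥E', incMat E' v f * x' f
        = ∑ f : ↥E', ∑ e : ↥E, x e * (incMat E' v f * flow e f) := by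
          refine Finset.sum_congr rfl fun f _ => ?_
          rw [hx', Finset.mul_sum]
          exact Finset.sum_congr rfl fun e _ => by ring
      _ = ∑ e : ↥E, ∑ f : ↥E', x e * (incMat E' v f * flow e f) := Finset.sum_comm
      _ = ∑ e : ↥E, x e * ∑ f : ↥E', incMat E' v f * flow e f := by
          refine Finset.sum_congr rfl fun e _ => ?_
          rw [Finset.mul_sum]
  have hfeas : incMat E' *ᵥ x' = b := by
    funext v
    rw [key v, ← hx]
    show _ = ∑ e : ↥E, incMat E v ↑e * x e
    refine Finset.sum_congr rfl fun e _ => ?_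
    rw [hcol e]
    simp only [incMat]
    ring
  have hcost' : onenorm (fun f : ↥E' => w ↑f * x' f)
      ≤ α * onenorm (fun e : ↥E => w ↑e * x e) := by
    have h1 : (fun f : ↥E' => w ↑f * x' f)
        = fun f : ↥E' => ∑ e : ↥E, w ↑f * (x e * flow e f) := by
      funext f
      rw [hx', Finset.mul_sum]
    rw [h1]
    calc onenorm (fun f : ↥E' => ∑ e : ↥E, w ↑f * (x e * flow e f))
        ≤ ∑ e : ↥E, onenorm (fun f : ↥E' => w ↑f * (x e * flow e f)) :=
          onenorm_sum_le _ _
      _ ≤ ∑ e : ↥E, |x e| * (α * w ↑e) := by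
          refine Finset.sum_le_sum fun e _ => ?_
          have heq : onenorm (fun f : ↥E' => w ↑f * (x e * flow e f))
              = |x e| * onenorm (fun f : ↥E' => w ↑f * flow e f) := by
            unfold onenorm
            rw [Finset.mul_sum]
            refine Finset.sum_congr rfl fun f _ => ?_
            show |w ↑f * (x e * flow e f)| = |x e| * |w ↑f * flow e f|
            rw [show w ↑f * (x e * flow e f) = x e * (w ↑f * flow e f) by ring, abs_mul]
          rw [heq]
          have h2 := onenorm_w_walkFlow E E' hE' w hw (l e) (↑e : V × V).1 (hchain e)
          exact mul_le_mul_of_nonneg_left (h2.trans (hcost e)) (abs_nonneg _)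
      _ = α * onenorm (fun e : ↥E => w ↑e * x e) := by
          unfold onenorm
          rw [Finset.mul_sum]
          refine Finset.sum_congr rfl fun e _ => ?_
          rw [abs_mul, abs_of_pos (hw _ e.prop)]
          ring
  refine ⟨⟨x', hfeas, hcost'⟩, ?_⟩
  intro xopt hfopt hopt
  constructor
  · funext v
    have h4 : (incMat E *ᵥ fun e : ↥E =>
          if h : (e : V × V) ∈ E' then xopt ⟨e, h⟩ else 0) v
        = ∑ e : ↥E, (fun p : V × V =>
            ((if v = p.2 then (1:ℝ) else 0) - (if v = p.1 then 1 else 0)) *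
            (if h : p ∈ E' then xopt ⟨p, h⟩ else 0)) ↑e := rfl
    rw [h4, sum_extend E E' hE' (fun p : V × V =>
          ((if v = p.2 then (1:ℝ) else 0) - (if v = p.1 then 1 else 0)) *
          (if h : p ∈ E' then xopt ⟨p, h⟩ else 0))
        (fun p _ hp => by simp only [dif_neg hp, mul_zero]), ← hfopt]
    show _ = ∑ f : ↥E', incMat E' v f * xopt f
    refine Finset.sum_congr rfl fun f _ => ?_
    simp [incMat, f.prop]
  · have h5 : onenorm (fun e : ↥E => w ↑e *
          (if h : (e : V × V) ∈ E' then xopt ⟨e, h⟩ else 0))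
        = onenorm (fun f : ↥E' => w ↑f * xopt f) := by
      unfold onenorm
      have h6 : ∑ e : ↥E, (fun p : V × V =>
            |w p * (if h : p ∈ E' then xopt ⟨p, h⟩ else 0)|) ↑e
          = ∑ f : ↥E', (fun p : V × V =>
            |w p * (if h : p ∈ E' then xopt ⟨p, h⟩ else 0)|) ↑f :=
        sum_extend E E' hE' (fun p : V × V =>
            |w p * (if h : p ∈ E' then xopt ⟨p, h⟩ else 0)|)
          (fun p _ hp => by simp only [dif_neg hp, mul_zero, abs_zero])
      rw [h6]
      refine Finset.sum_congr rfl fun f _ => ?_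
      simp [f.prop]
    rw [h5]
    exact (hopt x' hfeas).trans hcost'
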